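/- The integral of the error-sum function of Pierce expansions over [0,1] equals -1/8: ∫₀¹ E(x) dx = -1/8. -/

import Mathlib

open scoped BigOperators

/-- Reciprocal of an extended natural number as a real, with `1/∞ = 0`. -/
noncomputable def pinv (a : ℕ∞) : ℝ := ((a.toNat : ℕ) : ℝ)⁻¹

/-- First Pierce digit: `⌊1/x⌋` for `x ≠ 0`, and `∞` for `x = 0`. -/
noncomputable def pd1 (x : ℝ) : ℕ∞ := if x = 0 then ⊤ else (⌊x⁻¹⌋₊ : ℕ∞)

/-- Pierce map `T(x) = 1 - ⌊1/x⌋ x` for `x ≠ 0`, `T(0) = 0`. -/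
noncomputable def pT (x : ℝ) : ℝ := if x = 0 then 0 else 1 - (⌊x⁻¹⌋₊ : ℝ) * x

/-- `n`-th Pierce digit `d_n(x) = d_1(T^{n-1} x)` (for `n ≥ 1`). -/
noncomputable def pdig (n : ℕ) (x : ℝ) : ℕ∞ := pd1 (pT^[n-1] x)

/-- `1/(d_1(x) ⋯ d_n(x))`, with the convention that a factor `∞` makes it `0`. -/
noncomputable def pprodR (n : ℕ) (x : ℝ) : ℝ := ∏ k ∈ Finset.Icc 1 n, pinv (pdig k x)

/-- `n`-th partial sum `s_n(x)` of the Pierce expansion of `x`. -/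
noncomputable def psum (n : ℕ) (x : ℝ) : ℝ :=
  ∑ k ∈ Finset.Icc 1 n, (-1 : ℝ) ^ (k + 1) * pprodR k x

/-- The error-sum function of Pierce expansions `E(x) = Σ_{n≥1} (x - s_n(x))`. -/
noncomputable def pE (x : ℝ) : ℝ := ∑' n : ℕ, (x - psum (n + 1) x)

/-- A Pierce sequence (0-indexed: `σ k` is the paper's `σ_{k+1}`): terms are positive, strictly
increasing while finite, and once a term is `∞` all later terms are `∞`. -/
def IsPierce (σ : ℕ → ℕ∞) : Prop :=
  1 ≤ σ 0 ∧ ∀ n, σ n < σ (n + 1) ∨ (σ n = ⊤ ∧ σ (n + 1) = ⊤)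

/-- `n`-th partial sum `φ_n(σ)`. -/
noncomputable def pphiN (n : ℕ) (σ : ℕ → ℕ∞) : ℝ :=
  ∑ k ∈ Finset.range n, (-1 : ℝ) ^ k * ∏ i ∈ Finset.range (k + 1), pinv (σ i)

/-- `φ(σ) = Σ_{k≥1} (-1)^{k+1}/(σ_1 ⋯ σ_k)`. -/
noncomputable def pphi (σ : ℕ → ℕ∞) : ℝ :=
  ∑' k : ℕ, (-1 : ℝ) ^ k * ∏ i ∈ Finset.range (k + 1), pinv (σ i)

/-- The error-sum function of Pierce sequences `E*(σ) = Σ_{n≥1} (φ(σ) - φ_n(σ))`. -/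
noncomputable def pEstar (σ : ℕ → ℕ∞) : ℝ := ∑' n : ℕ, (pphi σ - pphiN (n + 1) σ)

/-- The series formula `Σ_{n≥1} (-1)^n n/(σ_1 ⋯ σ_{n+1})` for the error-sum of a sequence. -/
noncomputable def pEstarSeries (σ : ℕ → ℕ∞) : ℝ :=
  ∑' n : ℕ, (-1 : ℝ) ^ (n + 1) * (n + 1) * ∏ i ∈ Finset.range (n + 2), pinv (σ i)

/-- The metric `ρ(x,y) = 1/x + 1/y` for `x ≠ y` (with `1/∞ = 0`), `ρ(x,x) = 0`. -/
noncomputable def prho (x y : ℕ∞) : ℝ := if x = y then 0 else pinv x + pinv y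

/-- The metric `ρ^ℕ(σ,τ) = Σ_{n≥1} ρ(σ_n, τ_n)/n!` on sequences. -/
noncomputable def prhoN (σ τ : ℕ → ℕ∞) : ℝ :=
  ∑' n : ℕ, prho (σ n) (τ n) / ((n + 1).factorial : ℝ)

open MeasureTheory Filter Set

lemma pinv_pd1 (x : ℝ) : pinv (pd1 x) = if x = 0 then 0 else ((⌊x⁻¹⌋₊ : ℝ))⁻¹ := by
  unfold pd1 pinv
  split <;> simp

lemma pinv_nonneg' (a : ℕ∞) : 0 ≤ pinv a := by
  unfold pinv; positivity

lemma pT_zero : pT 0 = 0 := by simp [pT]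

lemma pT_lemma {x : ℝ} (hx0 : 0 < x) (hx1 : x ≤ 1) :
    0 ≤ pT x ∧ pT x < x ∧ (pT x ≠ 0 → ⌊x⁻¹⌋₊ + 1 ≤ ⌊(pT x)⁻¹⌋₊) := by
  have hxne : x ≠ 0 := ne_of_gt hx0
  have hinv1 : (1 : ℝ) ≤ x⁻¹ := (one_le_inv₀ hx0).mpr hx1
  set d : ℕ := ⌊x⁻¹⌋₊ with hd
  have hd1 : 1 ≤ d := Nat.le_floor (by exact_mod_cast hinv1)
  have hdle : (d : ℝ) ≤ x⁻¹ := Nat.floor_le (by positivity)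
  have hdlt : x⁻¹ < (d : ℝ) + 1 := Nat.lt_floor_add_one _
  have hT : pT x = 1 - (d : ℝ) * x := by simp [pT, hxne, hd]
  have hT0 : 0 ≤ pT x := by
    rw [hT]
    have : (d : ℝ) * x ≤ x⁻¹ * x := by nlinarith
    rw [inv_mul_cancel₀ hxne] at this
    linarith
  have hTlt : pT x < x := by
    rw [hT]
    have h1 : (1 : ℝ) < ((d : ℝ) + 1) * x := by
      have := mul_lt_mul_of_pos_right hdlt hx0
      rwa [inv_mul_cancel₀ hxne] at this
    nlinarith
  refine ⟨hT0, hTlt, fun hne => ?_⟩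
  have hTpos : 0 < pT x := lt_of_le_of_ne hT0 (Ne.symm hne)
  have hdpos : (0 : ℝ) < d := by exact_mod_cast hd1
  have key : ((d : ℝ) + 1) * pT x ≤ 1 := by
    rw [hT]
    have hx_inv_le : x⁻¹ ≤ (d : ℝ) + 1 := le_of_lt hdlt
    have h1 : (1 : ℝ) ≤ ((d : ℝ) + 1) * x := by
      have := mul_le_mul_of_nonneg_right hx_inv_le (le_of_lt hx0)
      rwa [inv_mul_cancel₀ hxne] at this
    nlinarith
  have : ((d : ℝ) + 1) ≤ (pT x)⁻¹ := by
    rw [← one_div]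
    rw [le_div_iff₀ hTpos]
    exact key
  exact_mod_cast Nat.le_floor (by exact_mod_cast this)

lemma iter_prop {x : ℝ} (hx0 : 0 ≤ x) (hx1 : x ≤ 1) :
    ∀ k : ℕ, pT^[k] x = 0 ∨
      (0 < pT^[k] x ∧ pT^[k] x ≤ 1 ∧ k + 1 ≤ ⌊(pT^[k] x)⁻¹⌋₊) := by
  intro k
  induction k with
  | zero =>
    simp only [Function.iterate_zero_apply]
    rcases eq_or_lt_of_le hx0 with h | h
    · exact Or.inl h.symm
    · refine Or.inr ⟨h, hx1, ?_⟩
      have h1 : ((1:ℕ):ℝ) ≤ x⁻¹ := by push_cast; exact (one_le_inv₀ h).mpr hx1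
      have := Nat.le_floor h1
      omega
  | succ k ih =>
    rw [Function.iterate_succ_apply']
    rcases ih with h | ⟨h0, h1, hf⟩
    · rw [h, pT_zero]; exact Or.inl rfl
    · rcases eq_or_ne (pT (pT^[k] x)) 0 with hz | hz
      · exact Or.inl hz
      · obtain ⟨hT0, hTlt, hfl⟩ := pT_lemma h0 h1
        exact Or.inr ⟨lt_of_le_of_ne hT0 (Ne.symm hz), le_of_lt (lt_of_lt_of_le hTlt h1),
          by have := hfl hz; omega⟩

lemma iter_mem {x : ℝ} (hx0 : 0 ≤ x) (hx1 : x ≤ 1) (k : ℕ) :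
    0 ≤ pT^[k] x ∧ pT^[k] x ≤ 1 := by
  rcases iter_prop hx0 hx1 k with h | ⟨h0, h1, _⟩
  · rw [h]; exact ⟨le_refl _, zero_le_one⟩
  · exact ⟨le_of_lt h0, h1⟩

lemma pinv_pdig_le {x : ℝ} (hx0 : 0 ≤ x) (hx1 : x ≤ 1) (k : ℕ) :
    pinv (pdig (k + 1) x) ≤ ((k + 1 : ℕ) : ℝ)⁻¹ := by
  have hdig : pdig (k + 1) x = pd1 (pT^[k] x) := by simp [pdig]
  rw [hdig, pinv_pd1]
  rcases iter_prop hx0 hx1 k with h | ⟨h0, h1, hf⟩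
  · rw [if_pos h]; positivity
  · rw [if_neg (ne_of_gt h0)]
    have hk : ((k + 1 : ℕ) : ℝ) ≤ (⌊(pT^[k] x)⁻¹⌋₊ : ℝ) := by exact_mod_cast hf
    have hpos : (0 : ℝ) < ((k + 1 : ℕ) : ℝ) := by positivity
    exact inv_anti₀ hpos hk

lemma pprodR_zero (x : ℝ) : pprodR 0 x = 1 := by simp [pprodR]

lemma pprodR_succ (n : ℕ) (x : ℝ) :
    pprodR (n + 1) x = pprodR n x * pinv (pdig (n + 1) x) :=
  Finset.prod_Icc_succ_top (by omega) _

lemma pprodR_nonneg (n : ℕ) (x : ℝ) : 0 ≤ pprodR n x :=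
  Finset.prod_nonneg fun _ _ => pinv_nonneg' _

lemma pprodR_le {x : ℝ} (hx0 : 0 ≤ x) (hx1 : x ≤ 1) :
    ∀ n : ℕ, pprodR n x ≤ ((n.factorial : ℕ) : ℝ)⁻¹ := by
  intro n
  induction n with
  | zero => simp [pprodR_zero]
  | succ n ih =>
    rw [pprodR_succ]
    have h1 := pinv_pdig_le hx0 hx1 n
    have h2 : ((n + 1).factorial : ℝ)⁻¹ = ((n.factorial : ℕ) : ℝ)⁻¹ * ((n + 1 : ℕ) : ℝ)⁻¹ := by
      rw [Nat.factorial_succ]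
      push_cast
      rw [mul_inv]
      ring
    rw [h2]
    exact mul_le_mul ih h1 (pinv_nonneg' _) (by positivity)

lemma psum_zero (x : ℝ) : psum 0 x = 0 := by simp [psum]

lemma psum_succ (n : ℕ) (x : ℝ) :
    psum (n + 1) x = psum n x + (-1 : ℝ) ^ (n + 2) * pprodR (n + 1) x :=
  Finset.sum_Icc_succ_top (by omega) _

lemma remainder {x : ℝ} (hx0 : 0 ≤ x) (hx1 : x ≤ 1) :
    ∀ n : ℕ, x - psum n x = (-1 : ℝ) ^ n * (pprodR n x * pT^[n] x) := by
  intro n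
  induction n with
  | zero => simp [psum_zero, pprodR_zero]
  | succ n ih =>
    have hdig : pdig (n + 1) x = pd1 (pT^[n] x) := by simp [pdig]
    rw [psum_succ, pprodR_succ, Function.iterate_succ_apply', hdig]
    rcases iter_prop hx0 hx1 n with h | ⟨h0, h1, hf⟩
    · rw [h, pT_zero]
      have : pinv (pd1 0) = 0 := by simp [pinv_pd1]
      rw [this]
      rw [h] at ih
      have hx' : x - psum n x = 0 := by rw [ih]; ring
      have : x - (psum n x + (-1:ℝ)^(n+2) * (pprodR n x * 0)) = 0 := by
        rw [mul_zero, mul_zero, add_zero]; exact hx'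
      rw [this]; ring
    · have hne : pT^[n] x ≠ 0 := ne_of_gt h0
      set y := pT^[n] x with hy
      set d : ℕ := ⌊y⁻¹⌋₊ with hd
      have hdpos : (0 : ℝ) < (d : ℝ) := by
        have : 1 ≤ d := le_trans (by omega) hf
        exact_mod_cast this
      have hdne : (d : ℝ) ≠ 0 := ne_of_gt hdpos
      have hpinv : pinv (pd1 y) = ((d : ℝ))⁻¹ := by
        rw [pinv_pd1, if_neg hne]
      have hpT : pT y = 1 - (d : ℝ) * y := by simp [pT, hne, hd]
      rw [hpinv, hpT]
      have h3 : x - psum n x = (-1:ℝ)^n * (pprodR n x * y) := ih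
      have : x - (psum n x + (-1:ℝ)^(n+2) * (pprodR n x * (d:ℝ)⁻¹))
          = (-1:ℝ)^n * (pprodR n x * y) - (-1:ℝ)^(n+2) * (pprodR n x * (d:ℝ)⁻¹) := by
        rw [← h3]; ring
      rw [this]
      field_simp
      ring

lemma term_bound {x : ℝ} (hx0 : 0 ≤ x) (hx1 : x ≤ 1) (n : ℕ) :
    |x - psum n x| ≤ ((n.factorial : ℕ) : ℝ)⁻¹ := by
  rw [remainder hx0 hx1 n]
  obtain ⟨hy0, hy1⟩ := iter_mem hx0 hx1 n
  have hP0 := pprodR_nonneg n x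
  have hPle := pprodR_le hx0 hx1 n
  rw [abs_mul, abs_pow, abs_neg, abs_one, one_pow, one_mul,
    abs_of_nonneg (mul_nonneg hP0 hy0)]
  calc pprodR n x * pT^[n] x ≤ pprodR n x * 1 := by
        exact mul_le_mul_of_nonneg_left hy1 hP0
    _ = pprodR n x := mul_one _
    _ ≤ _ := hPle

lemma summable_fact_inv : Summable (fun n : ℕ => ((n.factorial : ℕ) : ℝ)⁻¹) := by
  have h := Real.summable_pow_div_factorial 1
  refine h.congr fun n => ?_
  rw [one_pow, one_div]

lemma summable_term {x : ℝ} (hx0 : 0 ≤ x) (hx1 : x ≤ 1) :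
    Summable (fun n : ℕ => x - psum n x) := by
  refine Summable.of_norm_bounded summable_fact_inv fun n => ?_
  simpa [Real.norm_eq_abs] using term_bound hx0 hx1 n

lemma summable_term' {x : ℝ} (hx0 : 0 ≤ x) (hx1 : x ≤ 1) :
    Summable (fun n : ℕ => x - psum (n + 1) x) :=
  (summable_nat_add_iff (f := fun n : ℕ => x - psum n x) 1).mpr (summable_term hx0 hx1)

-- Measurability
lemma measurable_pinv_pd1 : Measurable fun x : ℝ => pinv (pd1 x) := by
  simp only [pinv_pd1]
  refine Measurable.ite (measurableSet_eq) measurable_const ?_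
  exact (measurable_from_top.comp (Nat.measurable_floor.comp measurable_inv)).inv

lemma measurable_pT : Measurable pT := by
  unfold pT
  refine Measurable.ite (measurableSet_eq) measurable_const ?_
  exact measurable_const.sub
    ((measurable_from_top.comp (Nat.measurable_floor.comp measurable_inv)).mul measurable_id)

lemma measurable_pinv_pdig (k : ℕ) : Measurable fun x : ℝ => pinv (pdig k x) := by
  unfold pdig
  exact measurable_pinv_pd1.comp (measurable_pT.iterate _)

lemma measurable_pprodR (n : ℕ) : Measurable (pprodR n) := by
  unfold pprodR
  exact Finset.measurable_prod _ fun k _ => measurable_pinv_pdig k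

lemma measurable_psum (n : ℕ) : Measurable (psum n) := by
  unfold psum
  exact Finset.measurable_sum _ fun k _ => (measurable_pprodR k).const_mul _

lemma hInt : IntervalIntegrable pE volume 0 1 := by
  rw [intervalIntegrable_iff]
  have hIoc : Set.uIoc (0:ℝ) 1 = Ioc (0:ℝ) 1 := uIoc_of_le (by norm_num)
  rw [hIoc]
  set μ := volume.restrict (Ioc (0:ℝ) 1)
  have hmem : ∀ᵐ x ∂μ, x ∈ Ioc (0:ℝ) 1 := ae_restrict_mem measurableSet_Ioc
  have haesm : AEStronglyMeasurable pE μ := by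
    refine aestronglyMeasurable_of_tendsto_ae (f := fun N x => ∑ n ∈ Finset.range N,
      (x - psum (n + 1) x)) atTop (fun N => ?_) ?_
    · exact (Finset.measurable_sum _ fun n _ =>
        measurable_id.sub (measurable_psum (n+1))).aestronglyMeasurable
    · filter_upwards [hmem] with x hx
      exact ((summable_term' (le_of_lt hx.1) hx.2).hasSum).tendsto_sum_nat
  refine ⟨haesm, ?_⟩
  refine HasFiniteIntegral.of_bounded (C := ∑' n : ℕ, (((n+1).factorial : ℕ) : ℝ)⁻¹) ?_
  filter_upwards [hmem] with x hx
  have hs : Summable (fun n : ℕ => (((n+1).factorial : ℕ) : ℝ)⁻¹) :=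
    (summable_nat_add_iff 1).mpr summable_fact_inv
  refine tsum_of_norm_bounded hs.hasSum fun n => ?_
  simpa [Real.norm_eq_abs] using term_bound (le_of_lt hx.1) hx.2 (n+1)

-- Functional equation
lemma pE_funEq {x : ℝ} (hx : x ∈ Ioc (1/2 : ℝ) 1) : pE x = (x - 1) - pE (1 - x) := by
  obtain ⟨hxl, hxr⟩ := hx
  have hx0 : (0:ℝ) < x := by linarith
  have hxne : x ≠ 0 := ne_of_gt hx0
  have hfloor : ⌊x⁻¹⌋₊ = 1 := by
    rw [Nat.floor_eq_iff (by positivity)]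
    constructor
    · exact_mod_cast (one_le_inv₀ hx0).mpr hxr
    · push_cast
      rw [inv_lt_comm₀ hx0 (by norm_num)]
      linarith
  have hT : pT x = 1 - x := by simp [pT, hxne, hfloor]
  have hdig : ∀ k : ℕ, pdig (k + 2) x = pdig (k + 1) (1 - x) := by
    intro k
    show pd1 (pT^[k+1] x) = pd1 (pT^[k] (1 - x))
    rw [Function.iterate_succ_apply, hT]
  have hdig1 : pinv (pdig 1 x) = 1 := by
    show pinv (pd1 (pT^[0] x)) = 1
    simp [pinv_pd1, hxne, hfloor]
  have hprod : ∀ n : ℕ, pprodR (n + 1) x = pprodR n (1 - x) := by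
    intro n
    induction n with
    | zero => rw [pprodR_succ, pprodR_zero, pprodR_zero, hdig1, mul_one]
    | succ n ih => rw [pprodR_succ, ih, hdig n, ← pprodR_succ]
  have hpsum : ∀ n : ℕ, psum (n + 1) x = 1 - psum n (1 - x) := by
    intro n
    induction n with
    | zero =>
      rw [psum_succ, psum_zero, psum_zero, hprod 0, pprodR_zero]
      norm_num
    | succ n ih =>
      rw [psum_succ, ih, hprod (n+1), psum_succ]
      ring
  have hy0 : (0:ℝ) ≤ 1 - x := by linarith
  have hy1 : (1:ℝ) - x ≤ 1 := by linarith
  have hs : Summable (fun n : ℕ => (1 - x) - psum n (1 - x)) := summable_term hy0 hy1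
  have h1 : pE x = ∑' n : ℕ, -((1 - x) - psum n (1 - x)) := by
    unfold pE
    refine tsum_congr fun n => ?_
    rw [hpsum n]; ring
  rw [h1, tsum_neg, hs.tsum_eq_zero_add, psum_zero]
  unfold pE
  ring

open intervalIntegral in
lemma linval : (∫ x in ((1:ℝ)/2)..1, (x - 1)) = -(1/8) := by
  rw [integral_sub intervalIntegrable_id intervalIntegrable_const, integral_id, intervalIntegral.integral_const]
  norm_num

theorem stmt18 : ∫ x in (0 : ℝ)..1, pE x = -(1 / 8 : ℝ) := by
  have h01 : IntervalIntegrable pE volume 0 (1/2) :=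
    hInt.mono_set (by rw [Set.uIcc_of_le (by norm_num : (0:ℝ) ≤ 1/2), Set.uIcc_of_le (by norm_num : (0:ℝ) ≤ 1)]; exact Set.Icc_subset_Icc (le_refl _) (by norm_num))
  have h121 : IntervalIntegrable pE volume (1/2) 1 :=
    hInt.mono_set (by rw [Set.uIcc_of_le (by norm_num : (1/2:ℝ) ≤ 1), Set.uIcc_of_le (by norm_num : (0:ℝ) ≤ 1)]; exact Set.Icc_subset_Icc (by norm_num) (le_refl _))
  have hsplit : (∫ x in (0:ℝ)..(1/2), pE x) + (∫ x in (1/2:ℝ)..1, pE x)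
      = ∫ x in (0:ℝ)..1, pE x :=
    intervalIntegral.integral_add_adjacent_intervals h01 h121
  have hcongr : (∫ x in (1/2:ℝ)..1, pE x)
      = ∫ x in (1/2:ℝ)..1, ((x - 1) - pE (1 - x)) := by
    refine intervalIntegral.integral_congr_ae ?_
    filter_upwards with x hx
    rw [Set.uIoc_of_le (by norm_num : (1/2:ℝ) ≤ 1)] at hx
    exact pE_funEq hx
  have hInt2 : IntervalIntegrable (fun x => pE (1 - x)) volume (1/2) 1 := by
    have h := (h01.comp_sub_left 1).symm
    norm_num at h
    exact h
  have hlin : IntervalIntegrable (fun x : ℝ => x - 1) volume (1/2) 1 :=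
    (by exact (intervalIntegral.intervalIntegrable_id).sub intervalIntegrable_const : IntervalIntegrable (fun x : ℝ => x - 1) volume (1/2) 1)
  have hsub : (∫ x in (1/2:ℝ)..1, ((x - 1) - pE (1 - x)))
      = (∫ x in (1/2:ℝ)..1, (x - 1)) - ∫ x in (1/2:ℝ)..1, pE (1 - x) :=
    intervalIntegral.integral_sub hlin hInt2
  have hlinval : (∫ x in (1/2:ℝ)..1, (x - 1)) = -(1/8) := linval
  have hcomp : (∫ x in (1/2:ℝ)..1, pE (1 - x)) = ∫ x in (0:ℝ)..(1/2), pE x := by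
    rw [intervalIntegral.integral_comp_sub_left pE 1]
    norm_num
  have := hsplit
  rw [hcongr, hsub, hlinval, hcomp] at this
  linarith
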